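/- Let X_{W'}, X_{W''}, Z be independent uniform random variables over F_{q^m} and let c'_W X_W, etc., be as follows: Y' = c'_W X_W + c'_{W'} X_{W'} + c' Z and Y'' = c''_{W''} X_{W''} + c'' (c_{W'} X_{W'} + Z), where all coefficients are nonzero elements of F_q and X_W is independent uniform as well. Then H(X_{W'} | Y', Y'') = H(X_{W'}) and H(X_{W''} | X_{W'}, Y', Y'') = H(X_{W''}). -/

import Mathlib

open scoped BigOperators

/-- Probability that the discrete random variable `X` (on a finite probability
space with weights `μ`) takes the value `a`. -/
noncomputable def pr {Ω α : Type*} [Fintype Ω] (μ : Ω → ℝ) [DecidableEq α]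
    (X : Ω → α) (a : α) : ℝ :=
  ∑ ω, if X ω = a then μ ω else 0

/-- Shannon entropy (in bits) of the discrete random variable `X`. -/
noncomputable def entH {Ω α : Type*} [Fintype Ω] [Fintype α] [DecidableEq α]
    (μ : Ω → ℝ) (X : Ω → α) : ℝ :=
  -∑ a, pr μ X a * Real.logb 2 (pr μ X a)

/-- Conditional Shannon entropy `H(X | Y) = H(X, Y) - H(Y)`. -/
noncomputable def condH {Ω α β : Type*} [Fintype Ω] [Fintype α] [DecidableEq α]
    [Fintype β] [DecidableEq β] (μ : Ω → ℝ) (X : Ω → α) (Y : Ω → β) : ℝ :=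
  entH μ (fun ω => (X ω, Y ω)) - entH μ Y

/-- `X` and `Y` are independent random variables. -/
def IndepRV {Ω α β : Type*} [Fintype Ω] [DecidableEq α] [DecidableEq β]
    (μ : Ω → ℝ) (X : Ω → α) (Y : Ω → β) : Prop :=
  ∀ a b, pr μ (fun ω => (X ω, Y ω)) (a, b) = pr μ X a * pr μ Y b

/-- `μ` is a probability mass function on the finite sample space `Ω`. -/
def IsPMF {Ω : Type*} [Fintype Ω] (μ : Ω → ℝ) : Prop :=
  (∀ ω, 0 ≤ μ ω) ∧ ∑ ω, μ ω = 1

lemma pr_unif_fst {Ω α β : Type*} [Fintype Ω] [Fintype α] [Fintype β] [DecidableEq α]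
    [Nonempty β]
    (μ : Ω → ℝ) (hμ : ∀ ω, μ ω = 1 / (Fintype.card Ω : ℝ)) (e : Ω ≃ α × β)
    (V : Ω → α) (hV : ∀ ω, V ω = (e ω).1) (a : α) :
    pr μ V a = 1 / (Fintype.card α : ℝ) := by
  have hcard : Fintype.card Ω = Fintype.card α * Fintype.card β := by
    rw [← Fintype.card_prod]; exact Fintype.card_congr e
  unfold pr
  simp only [hV, hμ]
  rw [Fintype.sum_equiv e _ (fun p => if p.1 = a then 1 / (Fintype.card Ω : ℝ) else 0)
    (fun ω => rfl)]
  rw [Fintype.sum_prod_type]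
  simp [Finset.sum_ite_eq', hcard]

lemma entH_unif {Ω α : Type*} [Fintype Ω] [Fintype α] [DecidableEq α] [Nonempty α]
    (μ : Ω → ℝ) (X : Ω → α) (h : ∀ a, pr μ X a = 1 / (Fintype.card α : ℝ)) :
    entH μ X = Real.logb 2 (Fintype.card α : ℝ) := by
  have hα : (Fintype.card α : ℝ) ≠ 0 := by exact_mod_cast Fintype.card_ne_zero
  unfold entH
  simp only [h]
  rw [Finset.sum_const, Finset.card_univ]
  rw [one_div, Real.logb_inv]
  field_simp
  rw [nsmul_eq_mul, mul_neg, neg_neg]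
  field_simp

lemma entH_unif_fst {Ω α β : Type*} [Fintype Ω] [Fintype α] [Fintype β]
    [DecidableEq α] [Nonempty α] [Nonempty β]
    (μ : Ω → ℝ) (hμ : ∀ ω, μ ω = 1 / (Fintype.card Ω : ℝ)) (e : Ω ≃ α × β)
    (V : Ω → α) (hV : ∀ ω, V ω = (e ω).1) :
    entH μ V = Real.logb 2 (Fintype.card α : ℝ) :=
  entH_unif μ V (fun a => pr_unif_fst μ hμ e V hV a)

/-- Core scrambling equivalence `(a,b,c,d) ↦ (b, Y', Y'', c)`. -/
noncomputable def Eequiv {F : Type*} [Field F]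
    (c'W c'W' c' c''W'' c'' cW' : F)
    (h1 : c'W ≠ 0) (h3 : c' ≠ 0) (h4 : c''W'' ≠ 0) (h5 : c'' ≠ 0) :
    (F × F × F × F) ≃ (F × F × F × F) where
  toFun ω := (ω.2.1, c'W * ω.1 + c'W' * ω.2.1 + c' * ω.2.2.2,
    c''W'' * ω.2.2.1 + c'' * (cW' * ω.2.1 + ω.2.2.2), ω.2.2.1)
  invFun v :=
    ((v.2.1 - c'W' * v.1 - c' * ((v.2.2.1 - c''W'' * v.2.2.2) / c'' - cW' * v.1)) / c'W,
      v.1, v.2.2.2, (v.2.2.1 - c''W'' * v.2.2.2) / c'' - cW' * v.1)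
  left_inv := by
    rintro ⟨a, b, c, d⟩
    simp only [Prod.mk.injEq]
    refine ⟨?_, ?_, ?_, ?_⟩ <;> (try trivial) <;> (field_simp; try ring)
  right_inv := by
    rintro ⟨b, y1, y2, c⟩
    simp only [Prod.mk.injEq]
    refine ⟨?_, ?_, ?_, ?_⟩ <;> (try trivial) <;> (field_simp; try ring)

def r1 {α β γ δ : Type*} : (α × β × γ × δ) ≃ ((α × β × γ) × δ) :=
  ⟨fun v => ((v.1, v.2.1, v.2.2.1), v.2.2.2), fun p => (p.1.1, p.1.2.1, p.1.2.2, p.2),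
    fun ⟨_, _, _, _⟩ => rfl, fun ⟨⟨_, _, _⟩, _⟩ => rfl⟩

def r3 {α β γ δ : Type*} : (α × β × γ × δ) ≃ ((β × γ) × α × δ) :=
  ⟨fun v => ((v.2.1, v.2.2.1), v.1, v.2.2.2), fun p => (p.2.1, p.1.1, p.1.2, p.2.2),
    fun ⟨_, _, _, _⟩ => rfl, fun ⟨⟨_, _⟩, _, _⟩ => rfl⟩

def r4 {α β γ δ : Type*} : (α × β × γ × δ) ≃ ((α × β × γ) × δ) := r1

def r4' {α β γ δ : Type*} : (α × β × γ × δ) ≃ ((α × (β × γ)) × δ) :=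
  ⟨fun v => ((v.1, (v.2.1, v.2.2.1)), v.2.2.2), fun p => (p.1.1, p.1.2.1, p.1.2.2, p.2),
    fun ⟨_, _, _, _⟩ => rfl, fun ⟨⟨_, _, _⟩, _⟩ => rfl⟩

def r5 {α β γ δ : Type*} : (α × β × γ × δ) ≃ (δ × α × β × γ) :=
  ⟨fun v => (v.2.2.2, v.1, v.2.1, v.2.2.1), fun p => (p.2.1, p.2.2.1, p.2.2.2, p.1),
    fun ⟨_, _, _, _⟩ => rfl, fun ⟨_, _, _, _⟩ => rfl⟩

def r6 {α β γ δ : Type*} : (α × β × γ × δ) ≃ ((δ × α × β × γ) × Unit) :=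
  ⟨fun v => ((v.2.2.2, v.1, v.2.1, v.2.2.1), ()), fun p => (p.1.2.1, p.1.2.2.1, p.1.2.2.2, p.1.1),
    fun ⟨_, _, _, _⟩ => rfl, fun ⟨⟨_, _, _, _⟩, _⟩ => rfl⟩

def r8 {α β γ δ : Type*} : (α × β × γ × δ) ≃ (α × (β × γ × δ)) :=
  Equiv.refl _

/-- with `X_W, X_{W'}, X_{W''}, Z` independent uniform on `F_{q^m}`
(modelled as the four coordinates of a uniform point of `F × F × F × F`),
`Y' = c'_W X_W + c'_{W'} X_{W'} + c' Z` and
`Y'' = c''_{W''} X_{W''} + c'' (c_{W'} X_{W'} + Z)` with all coefficients nonzero,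
we have `H(X_{W'} | Y', Y'') = H(X_{W'})` and
`H(X_{W''} | X_{W'}, Y', Y'') = H(X_{W''})`. -/
theorem stmt10 {F : Type*} [Field F] [Fintype F] [DecidableEq F]
    (c'W c'W' c' c''W'' c'' cW' : F)
    (h1 : c'W ≠ 0) (h2 : c'W' ≠ 0) (h3 : c' ≠ 0)
    (h4 : c''W'' ≠ 0) (h5 : c'' ≠ 0) (h6 : cW' ≠ 0)
    (μ : F × F × F × F → ℝ)
    (hμ : ∀ ω, μ ω = 1 / (Fintype.card (F × F × F × F) : ℝ))
    (XW XW' XW'' Z : F × F × F × F → F)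
    (hXW : ∀ ω, XW ω = ω.1) (hXW' : ∀ ω, XW' ω = ω.2.1)
    (hXW'' : ∀ ω, XW'' ω = ω.2.2.1) (hZ : ∀ ω, Z ω = ω.2.2.2)
    (Y' Y'' : F × F × F × F → F)
    (hY' : ∀ ω, Y' ω = c'W * XW ω + c'W' * XW' ω + c' * Z ω)
    (hY'' : ∀ ω, Y'' ω = c''W'' * XW'' ω + c'' * (cW' * XW' ω + Z ω)) :
    condH μ XW' (fun ω => (Y' ω, Y'' ω)) = entH μ XW' ∧
    condH μ XW'' (fun ω => (XW' ω, Y' ω, Y'' ω)) = entH μ XW'' := by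
  haveI : Nonempty F := ⟨0⟩
  set E := Eequiv c'W c'W' c' c''W'' c'' cW' h1 h3 h4 h5 with hE
  have hEfun : ∀ ω : F × F × F × F, E ω = (XW' ω, Y' ω, Y'' ω, XW'' ω) := by
    intro ω
    simp [hE, Eequiv, hXW, hXW', hXW'', hZ, hY', hY'']
  set q : ℝ := (Fintype.card F : ℝ) with hq
  have hq0 : q ≠ 0 := by
    rw [hq]; exact_mod_cast Fintype.card_ne_zero
  have e1 : entH μ (fun ω => (XW' ω, Y' ω, Y'' ω)) =
      Real.logb 2 (Fintype.card (F × F × F) : ℝ) :=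
    entH_unif_fst μ hμ (E.trans r1) (fun ω => (XW' ω, Y' ω, Y'' ω))
      (fun ω => by simp [r1, hEfun ω])
  have e2 : entH μ (fun ω => (XW'' ω, XW' ω, Y' ω, Y'' ω)) =
      Real.logb 2 (Fintype.card (F × F × F × F) : ℝ) :=
    entH_unif_fst μ hμ (E.trans r6) (fun ω => (XW'' ω, XW' ω, Y' ω, Y'' ω))
      (fun ω => by simp [r6, hEfun ω])
  have e3 : entH μ (fun ω => (Y' ω, Y'' ω)) =
      Real.logb 2 (Fintype.card (F × F) : ℝ) :=
    entH_unif_fst μ hμ (E.trans r3) (fun ω => (Y' ω, Y'' ω))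
      (fun ω => by simp [r3, hEfun ω])
  have e4 : entH μ (fun ω => (XW' ω, (Y' ω, Y'' ω))) =
      Real.logb 2 (Fintype.card (F × F × F) : ℝ) := by
    have := entH_unif_fst μ hμ (E.trans r4') (fun ω => (XW' ω, (Y' ω, Y'' ω)))
      (fun ω => by simp [r4', hEfun ω])
    simpa using this
  have e5 : entH μ XW' = Real.logb 2 q :=
    entH_unif_fst μ hμ (E.trans r8) XW' (fun ω => by simp [r8, hEfun ω, hXW'])
  have e6 : entH μ XW'' = Real.logb 2 q :=
    entH_unif_fst μ hμ (E.trans r5) XW'' (fun ω => by simp [r5, hEfun ω, hXW''])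
  have c2 : (Fintype.card (F × F) : ℝ) = q * q := by
    simp [Fintype.card_prod, hq]
  have c3 : (Fintype.card (F × F × F) : ℝ) = q * (q * q) := by
    simp [Fintype.card_prod, hq, mul_assoc]
  have c4 : (Fintype.card (F × F × F × F) : ℝ) = q * (q * (q * q)) := by
    simp [Fintype.card_prod, hq, mul_assoc]
  have hqq0 : q * q ≠ 0 := mul_ne_zero hq0 hq0
  constructor
  · show entH μ (fun ω => (XW' ω, (Y' ω, Y'' ω))) - entH μ (fun ω => (Y' ω, Y'' ω)) = _
    rw [e4, e3, e5, c2, c3, Real.logb_mul hq0 hqq0]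
    ring
  · show entH μ (fun ω => (XW'' ω, XW' ω, Y' ω, Y'' ω)) -
      entH μ (fun ω => (XW' ω, Y' ω, Y'' ω)) = _
    rw [e2, e1, e6, c3, c4, Real.logb_mul hq0 (mul_ne_zero hq0 hqq0)]
    ring
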